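/- Let H be a symmetric matrix on E^{(k)} and L a symmetric positive-definite matrix on E^{(k)} satisfying L H L ≤ −L in the Loewner order. Then H is negative definite and 0 < (−H)^{-1} ≤ L. -/

import Mathlib

open Matrix

private lemma posDef_conj_aux {m : ℕ} {M : Matrix (Fin m) (Fin m) ℝ}
    (hM : M.PosDef) (B : Matrix (Fin m) (Fin m) ℝ) (hB : IsUnit B) :
    (Bᴴ * M * B).PosDef := by
  refine Matrix.PosDef.of_dotProduct_mulVec_pos (Matrix.isHermitian_conjTranspose_mul_mul B hM.isHermitian) fun x hx => ?_
  have hinj : Function.Injective B.mulVec := Matrix.mulVec_injective_iff_isUnit.mpr hB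
  have hx' : B *ᵥ x ≠ 0 := fun h => hx (hinj (h.trans (Matrix.mulVec_zero B).symm))
  have h := hM.dotProduct_mulVec_pos hx'
  rw [Matrix.mul_assoc, ← Matrix.mulVec_mulVec, Matrix.dotProduct_mulVec,
    ← Matrix.star_mulVec, ← Matrix.mulVec_mulVec]
  exact h

/-- If `H` is symmetric, `L` is symmetric positive definite and `L H L ≤ -L` in the
Loewner order, then `H` is negative definite and `0 < (-H)⁻¹ ≤ L`. -/
theorem loewner_sandwich (m : ℕ) (H L : Matrix (Fin m) (Fin m) ℝ)
    (hH : H.IsSymm) (hL : L.PosDef)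
    (hLHL : (-L - L * H * L).PosSemidef) :
    (-H).PosDef ∧ ((-H)⁻¹).PosDef ∧ (L - (-H)⁻¹).PosSemidef := by
  have hB : (L * (-H) * L - L).PosSemidef := by
    have h : -L - L * H * L = L * (-H) * L - L := by noncomm_ring
    rwa [h] at hLHL
  have hA : (L * (-H) * L).PosDef := by
    simpa using Matrix.PosDef.posSemidef_add hB hL
  haveI := hL.isUnit.invertible
  have hK : (-H).PosDef := by
    have h1 := posDef_conj_aux hA L⁻¹ hL.inv.isUnit
    rw [hL.inv.isHermitian.eq] at h1
    have h3 : L⁻¹ * (L * (-H) * L) * L⁻¹ = -H := by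
      simp [Matrix.mul_assoc, Matrix.inv_mul_cancel_left_of_invertible,
        Matrix.mul_inv_of_invertible, Matrix.mul_one]
    rwa [h3] at h1
  refine ⟨hK, hK.inv, ?_⟩
  haveI := hK.isUnit.invertible
  haveI := hA.isUnit.invertible
  set A := L * (-H) * L with hAdef
  have hKinv : (-H)⁻¹ = L * A⁻¹ * L := by
    apply Matrix.inv_eq_right_inv
    have h : (-H) * L = L⁻¹ * A := by
      rw [hAdef, Matrix.mul_assoc, Matrix.inv_mul_cancel_left_of_invertible]
    rw [show (-H) * (L * A⁻¹ * L) = ((-H) * L) * A⁻¹ * L by noncomm_ring, h]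
    simp [Matrix.mul_assoc, Matrix.mul_inv_cancel_left_of_invertible,
      Matrix.inv_mul_of_invertible]
  rw [hKinv]
  set B := A - L with hBdef
  have hBH : Bᴴ = B := by
    rw [hBdef, conjTranspose_sub, hA.isHermitian.eq, hL.isHermitian.eq]
  have hiAH : (A⁻¹)ᴴ = A⁻¹ := hA.inv.isHermitian.eq
  have key : L - L * A⁻¹ * L
      = (L * A⁻¹ * B) * L⁻¹ * (L * A⁻¹ * B)ᴴ + (L * A⁻¹) * B * (L * A⁻¹)ᴴ := by
    simp only [conjTranspose_mul, hBH, hiAH, hL.isHermitian.eq, hBdef, conjTranspose_sub, hA.isHermitian.eq]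
    simp only [Matrix.sub_mul, Matrix.mul_sub, Matrix.mul_assoc,
      Matrix.inv_mul_cancel_left_of_invertible, Matrix.mul_inv_cancel_left_of_invertible,
      Matrix.mul_inv_of_invertible, Matrix.inv_mul_of_invertible,
      Matrix.mul_one, Matrix.one_mul]
    abel
  rw [key]
  exact ((hL.inv.posSemidef.mul_mul_conjTranspose_same _).add
    ((hB.mul_mul_conjTranspose_same _)))
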